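/- Let Q : ℝⁿ → Matrix (Fin m) (Fin m) ℝ have continuously differentiable entries x ↦ q_{ij}(x). Then for every t ≥ 0, every f : Fin m → ℝ, every i ∈ Fin m and every coordinate k ∈ {1,…,n}, the map x ↦ (exp(t•Q(x)) f)(i) is differentiable in x and ∂_{x_k} (exp(t•Q(x)) f)(i) = ∫₀^t ( exp(s•Q(x)) · (∂_{x_k} Q(x)) · exp((t−s)•Q(x)) f )(i) ds. -/

import Mathlib

open MeasureTheory

noncomputable section

/-- Entrywise partial derivative `∂_{x_k} Q(x)` of a matrix-valued function of
`x ∈ ℝⁿ` in the `k`-th coordinate direction. -/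
def matPartialDeriv {n m : ℕ} (Q : EuclideanSpace ℝ (Fin n) → Matrix (Fin m) (Fin m) ℝ)
    (k : Fin n) (x : EuclideanSpace ℝ (Fin n)) : Matrix (Fin m) (Fin m) ℝ :=
  Matrix.of fun i j => fderiv ℝ (fun y => Q y i j) x (EuclideanSpace.single k 1)

namespace DuhamelAux


open NormedSpace Filter Topology

attribute [local instance] Matrix.linftyOpSemiNormedRing Matrix.linftyOpNormedRing
  Matrix.linftyOpNormedAlgebra

variable {m : ℕ}

theorem matrix_rep (M : Matrix (Fin m) (Fin m) ℝ) :
    M = ∑ i : Fin m, ∑ j : Fin m, M i j • Matrix.single i j (1:ℝ) := by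
  conv_lhs => rw [Matrix.matrix_eq_sum_single M]
  simp [Matrix.smul_single]

theorem duhamel (A B : Matrix (Fin m) (Fin m) ℝ) (t : ℝ) :
    exp (t • B) - exp (t • A)
      = ∫ s in (0:ℝ)..t, exp (s • B) * (B - A) * exp ((t - s) • A) := by
  have key : ∀ s : ℝ, HasDerivAt (fun u : ℝ => exp (u • B) * exp ((t - u) • A))
      (exp (s • B) * (B - A) * exp ((t - s) • A)) s := by
    intro s
    have hB : HasDerivAt (fun u : ℝ => exp (u • B)) (exp (s • B) * B) s :=
      hasDerivAt_exp_smul_const B s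
    have hlin : HasDerivAt (fun u : ℝ => t - u) (-1 : ℝ) s := by
      simpa using (hasDerivAt_id s).const_sub t
    have hA : HasDerivAt (fun u : ℝ => exp ((t - u) • A))
        ((-1 : ℝ) • (A * exp ((t - s) • A))) s :=
      (hasDerivAt_exp_smul_const' A (t - s)).scomp s hlin
    have h := hB.mul hA
    refine h.congr_deriv ?_
    rw [mul_sub, sub_mul]
    simp [mul_assoc, sub_eq_add_neg]
  have hcont : Continuous fun s : ℝ => exp (s • B) * (B - A) * exp ((t - s) • A) := by
    refine Continuous.mul (Continuous.mul ?_ continuous_const) ?_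
    · exact exp_continuous.comp (continuous_id.smul continuous_const)
    · exact exp_continuous.comp ((continuous_const.sub continuous_id).smul continuous_const)
  have h := intervalIntegral.integral_eq_sub_of_hasDerivAt
      (f := fun u : ℝ => exp (u • B) * exp ((t - u) • A)) (fun s _ => key s)
      (hcont.intervalIntegrable 0 t)
  rw [h]
  simp

variable {E : Type*} [NormedAddCommGroup E] [NormedSpace ℝ E]

theorem differentiable_matrix_fun {Q : E → Matrix (Fin m) (Fin m) ℝ}
    (hQ : ∀ i j, Differentiable ℝ fun x => Q x i j) : Differentiable ℝ Q := by
  have hrep : Q = fun x => ∑ i : Fin m, ∑ j : Fin m,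
      Q x i j • Matrix.single i j (1:ℝ) := funext fun x => matrix_rep (Q x)
  rw [hrep]
  exact Differentiable.fun_sum fun i _ => Differentiable.fun_sum fun j _ => (hQ i j).smul_const _

theorem hasDerivAt_comp_line {Q : E → Matrix (Fin m) (Fin m) ℝ}
    (hQ : ∀ i j, Differentiable ℝ fun x => Q x i j) (x e : E) :
    HasDerivAt (fun r : ℝ => Q (x + r • e))
      (Matrix.of fun i j => fderiv ℝ (fun y => Q y i j) x e) 0 := by
  have hline : HasDerivAt (fun r : ℝ => x + r • e) e 0 := by
    simpa using ((hasDerivAt_id (0:ℝ)).smul_const e).const_add x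
  have hentry : ∀ i j, HasDerivAt (fun r : ℝ => Q (x + r • e) i j)
      (fderiv ℝ (fun y => Q y i j) x e) 0 := by
    intro i j
    have hf : HasFDerivAt (fun y => Q y i j) (fderiv ℝ (fun y => Q y i j) x)
        (x + (0:ℝ) • e) := by
      rw [show x + (0:ℝ) • e = x by simp]
      exact ((hQ i j) x).hasFDerivAt
    exact hf.comp_hasDerivAt 0 hline
  have hsum : HasDerivAt
      (fun r : ℝ => ∑ i : Fin m, ∑ j : Fin m,
        Q (x + r • e) i j • Matrix.single i j (1:ℝ))
      (∑ i : Fin m, ∑ j : Fin m,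
        (fderiv ℝ (fun y => Q y i j) x e) • Matrix.single i j (1:ℝ)) 0 :=
    HasDerivAt.fun_sum fun i _ => HasDerivAt.fun_sum fun j _ => (hentry i j).smul_const _
  convert hsum using 1
  · funext r; exact matrix_rep _
  · exact matrix_rep _


theorem differentiable_exp_comp {Q : E → Matrix (Fin m) (Fin m) ℝ}
    (hQ : ∀ i j, Differentiable ℝ fun x => Q x i j) (t : ℝ) :
    Differentiable ℝ fun y => exp (t • Q y) := by
  have hQd : Differentiable ℝ Q := differentiable_matrix_fun hQ
  intro y
  exact ((exp_analytic (t • Q y)).differentiableAt).comp y ((hQd y).const_smul t)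

theorem fderiv_exp_eq {Q : E → Matrix (Fin m) (Fin m) ℝ}
    (hQ : ∀ i j, Differentiable ℝ fun x => Q x i j) (t : ℝ) (x e : E) :
    fderiv ℝ (fun y => exp (t • Q y)) x e
      = ∫ s in (0:ℝ)..t, exp (s • Q x)
          * (Matrix.of fun i j => fderiv ℝ (fun y => Q y i j) x e)
          * exp ((t - s) • Q x) := by
  set P : Matrix (Fin m) (Fin m) ℝ :=
    Matrix.of fun i j => fderiv ℝ (fun y => Q y i j) x e with hP
  have hQd : Differentiable ℝ Q := differentiable_matrix_fun hQ
  have hQc : Continuous Q := hQd.continuous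
  have hGdiff : Differentiable ℝ fun y => exp (t • Q y) := differentiable_exp_comp hQ t
  have hline : HasDerivAt (fun r : ℝ => x + r • e) e 0 := by
    simpa using ((hasDerivAt_id (0:ℝ)).smul_const e).const_add x
  have hx0 : x + (0:ℝ) • e = x := by simp
  have hg : HasDerivAt (fun r : ℝ => exp (t • Q (x + r • e)))
      (fderiv ℝ (fun y => exp (t • Q y)) x e) 0 := by
    have hf : HasFDerivAt (fun y => exp (t • Q y))
        (fderiv ℝ (fun y => exp (t • Q y)) x) (x + (0:ℝ) • e) := by
      rw [hx0]; exact (hGdiff x).hasFDerivAt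
    exact hf.comp_hasDerivAt 0 hline
  have hs1 : Tendsto (slope (fun r : ℝ => exp (t • Q (x + r • e))) 0) (𝓝[≠] (0:ℝ))
      (𝓝 (fderiv ℝ (fun y => exp (t • Q y)) x e)) :=
    hasDerivAt_iff_tendsto_slope.mp hg
  have hRt : Tendsto (fun r : ℝ => r⁻¹ • (Q (x + r • e) - Q x)) (𝓝[≠] (0:ℝ)) (𝓝 P) := by
    have h := hasDerivAt_iff_tendsto_slope.mp (hasDerivAt_comp_line hQ x e)
    refine h.congr fun r => ?_
    simp [slope_def_module, hx0]
  have hQt : Tendsto (fun r : ℝ => Q (x + r • e)) (𝓝[≠] (0:ℝ)) (𝓝 (Q x)) := by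
    have h1 : Tendsto (fun r : ℝ => x + r • e) (𝓝 (0:ℝ)) (𝓝 x) := by
      have h := hline.continuousAt.tendsto
      rwa [hx0] at h
    exact ((hQc.tendsto _).comp h1).mono_left nhdsWithin_le_nhds
  set F : ℝ → ℝ → Matrix (Fin m) (Fin m) ℝ := fun r s =>
    exp (s • Q (x + r • e)) * (r⁻¹ • (Q (x + r • e) - Q x)) * exp ((t - s) • Q x) with hF
  have hFcont : ∀ r : ℝ, Continuous fun s => F r s := by
    intro r
    refine Continuous.mul (Continuous.mul ?_ continuous_const) ?_
    · exact exp_continuous.comp (continuous_id.smul continuous_const)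
    · exact exp_continuous.comp ((continuous_const.sub continuous_id).smul continuous_const)
  obtain ⟨C₁, hC₁⟩ := (IsCompact.prod (isCompact_Icc : IsCompact (Set.Icc (-1:ℝ) 1))
      (isCompact_uIcc : IsCompact (Set.uIcc (0:ℝ) t))).exists_bound_of_continuousOn
      (f := fun p : ℝ × ℝ => exp (p.2 • Q (x + p.1 • e)))
      (Continuous.continuousOn (exp_continuous.comp (continuous_snd.smul (hQc.comp
          (continuous_const.add (continuous_fst.smul continuous_const))))))
  obtain ⟨C₂, hC₂⟩ := (isCompact_uIcc :
      IsCompact (Set.uIcc (0:ℝ) t)).exists_bound_of_continuousOn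
      (f := fun s : ℝ => exp ((t - s) • Q x))
      (Continuous.continuousOn (exp_continuous.comp
        ((continuous_const.sub continuous_id).smul continuous_const)))
  have hC₁0 : 0 ≤ C₁ :=
    le_trans (norm_nonneg _) (hC₁ ((0:ℝ), (0:ℝ)) ⟨by norm_num, Set.left_mem_uIcc⟩)
  have hC₂0 : 0 ≤ C₂ := le_trans (norm_nonneg _) (hC₂ 0 Set.left_mem_uIcc)
  have hev1 : ∀ᶠ r in 𝓝[≠] (0:ℝ), r ∈ Set.Icc (-1:ℝ) 1 :=
    mem_nhdsWithin_of_mem_nhds (Icc_mem_nhds (by norm_num) (by norm_num))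
  have hev2 : ∀ᶠ r in 𝓝[≠] (0:ℝ), ‖r⁻¹ • (Q (x + r • e) - Q x)‖ ≤ ‖P‖ + 1 := by
    have := hRt.norm
    exact (this.eventually (eventually_le_nhds (lt_add_one ‖P‖)))
  have hDCT : Tendsto (fun r => ∫ s in (0:ℝ)..t, F r s) (𝓝[≠] (0:ℝ))
      (𝓝 (∫ s in (0:ℝ)..t, exp (s • Q x) * P * exp ((t - s) • Q x))) := by
    refine intervalIntegral.tendsto_integral_filter_of_dominated_convergence
      (bound := fun _ => C₁ * ((‖P‖ + 1) * C₂)) ?_ ?_ ?_ ?_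
    · haveI : TopologicalSpace.PseudoMetrizableSpace (Matrix (Fin m) (Fin m) ℝ) :=
        inferInstanceAs (TopologicalSpace.PseudoMetrizableSpace (Fin m → Fin m → ℝ))
      exact Eventually.of_forall fun r => (hFcont r).aestronglyMeasurable
    · filter_upwards [hev1, hev2] with r hr1 hr2
      refine Eventually.of_forall fun s => fun hs => ?_
      calc ‖F r s‖
          ≤ ‖exp (s • Q (x + r • e)) * (r⁻¹ • (Q (x + r • e) - Q x))‖ *
              ‖exp ((t - s) • Q x)‖ := norm_mul_le _ _
        _ ≤ (‖exp (s • Q (x + r • e))‖ * ‖r⁻¹ • (Q (x + r • e) - Q x)‖) *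
              ‖exp ((t - s) • Q x)‖ :=
            mul_le_mul_of_nonneg_right (norm_mul_le _ _) (norm_nonneg _)
        _ ≤ C₁ * ((‖P‖ + 1) * C₂) := by
            rw [mul_assoc]
            refine mul_le_mul (hC₁ (r, s) ⟨hr1, Set.uIoc_subset_uIcc hs⟩)
              (mul_le_mul hr2 (hC₂ s (Set.uIoc_subset_uIcc hs)) (norm_nonneg _)
                (by positivity)) ?_ hC₁0
            exact mul_nonneg (norm_nonneg _) (norm_nonneg _)
    · exact intervalIntegrable_const
    · refine Eventually.of_forall fun s => fun _ => ?_
      have h1 : Tendsto (fun r : ℝ => exp (s • Q (x + r • e))) (𝓝[≠] (0:ℝ))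
          (𝓝 (exp (s • Q x))) := ((hQt.const_smul s).exp)
      exact (h1.mul hRt).mul tendsto_const_nhds
  have heq : ∀ᶠ r in 𝓝[≠] (0:ℝ),
      (∫ s in (0:ℝ)..t, F r s) = slope (fun r : ℝ => exp (t • Q (x + r • e))) 0 r := by
    filter_upwards [self_mem_nhdsWithin] with r hr
    have hr0 : r ≠ 0 := hr
    rw [slope_def_module]
    simp only [sub_zero, hx0]
    rw [duhamel (Q x) (Q (x + r • e)) t, ← intervalIntegral.integral_smul]
    congr 1
    funext s
    rw [← smul_mul_assoc, ← mul_smul_comm]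
  have hs2 : Tendsto (slope (fun r : ℝ => exp (t • Q (x + r • e))) 0) (𝓝[≠] (0:ℝ))
      (𝓝 (∫ s in (0:ℝ)..t, exp (s • Q x) * P * exp ((t - s) • Q x))) :=
    hDCT.congr' heq
  exact tendsto_nhds_unique hs1 hs2


theorem scalar_version {n m : ℕ} (Q : EuclideanSpace ℝ (Fin n) → Matrix (Fin m) (Fin m) ℝ)
    (hQ : ∀ i j, Differentiable ℝ fun x => Q x i j) (t : ℝ) (f : Fin m → ℝ) (i : Fin m)
    (k : Fin n) :
    (Differentiable ℝ fun x => (NormedSpace.exp (t • Q x)).mulVec f i) ∧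
      ∀ x : EuclideanSpace ℝ (Fin n),
        fderiv ℝ (fun y => (NormedSpace.exp (t • Q y)).mulVec f i) x
            (EuclideanSpace.single k 1)
          = ∫ s in (0:ℝ)..t,
              (NormedSpace.exp (s • Q x) * matPartialDeriv Q k x *
                NormedSpace.exp ((t - s) • Q x)).mulVec f i := by
  classical
  set L : Matrix (Fin m) (Fin m) ℝ →L[ℝ] ℝ := LinearMap.toContinuousLinearMap
    { toFun := fun M => M.mulVec f i
      map_add' := fun M N => by simp [Matrix.add_mulVec]
      map_smul' := fun c M => by simp [Matrix.smul_mulVec] } with hL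
  have hLapp : ∀ M : Matrix (Fin m) (Fin m) ℝ, L M = M.mulVec f i := fun M => rfl
  have hGdiff : Differentiable ℝ fun y => NormedSpace.exp (t • Q y) :=
    differentiable_exp_comp hQ t
  have key : (fun x : EuclideanSpace ℝ (Fin n) => (NormedSpace.exp (t • Q x)).mulVec f i)
      = fun y => L (NormedSpace.exp (t • Q y)) := by
    funext y; rw [hLapp]
  constructor
  · rw [key]
    exact fun y => (L.differentiableAt).comp y (hGdiff y)
  · intro x
    have hfd : HasFDerivAt (fun y => L (NormedSpace.exp (t • Q y)))
        (L.comp (fderiv ℝ (fun y => NormedSpace.exp (t • Q y)) x)) x :=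
      (L.hasFDerivAt).comp x (hGdiff x).hasFDerivAt
    rw [key, hfd.fderiv, ContinuousLinearMap.comp_apply,
      fderiv_exp_eq hQ t x (EuclideanSpace.single k 1)]
    have hInt : @IntervalIntegrable _ PseudoMetricSpace.toUniformSpace.toTopologicalSpace
        NormedAddGroup.toENormedAddMonoid (fun s => NormedSpace.exp (s • Q x) *
        matPartialDeriv Q k x * NormedSpace.exp ((t - s) • Q x)) volume 0 t := by
      apply Continuous.intervalIntegrable
      refine Continuous.mul (Continuous.mul ?_ continuous_const) ?_
      · exact NormedSpace.exp_continuous.comp (continuous_id.smul continuous_const)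
      · exact NormedSpace.exp_continuous.comp
          ((continuous_const.sub continuous_id).smul continuous_const)
    have hcomm := ContinuousLinearMap.intervalIntegral_comp_comm L hInt
    have hPdef : (Matrix.of fun i j => fderiv ℝ (fun y => Q y i j) x
        (EuclideanSpace.single k 1)) = matPartialDeriv Q k x := rfl
    rw [hPdef]
    refine hcomm.symm.trans ?_
    rfl

end DuhamelAux

/-- If the entries of `Q : ℝⁿ → Matrix (Fin m) (Fin m) ℝ` are `C¹`, then for every `t ≥ 0`,
`f : Fin m → ℝ`, `i` and coordinate `k`, the map `x ↦ (exp(t•Q(x)) f)(i)` is differentiable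
and `∂_{x_k} (exp(t•Q(x)) f)(i) = ∫₀^t (exp(s•Q(x)) · ∂_{x_k}Q(x) · exp((t−s)•Q(x)) f)(i) ds`. -/
theorem partialDeriv_semigroup_eq_integral {n m : ℕ}
    (Q : EuclideanSpace ℝ (Fin n) → Matrix (Fin m) (Fin m) ℝ)
    (hQ : ∀ i j, ContDiff ℝ 1 fun x => Q x i j) :
    ∀ (t : ℝ), 0 ≤ t → ∀ (f : Fin m → ℝ) (i : Fin m) (k : Fin n),
      (Differentiable ℝ fun x => (NormedSpace.exp (t • Q x)).mulVec f i) ∧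
      ∀ x : EuclideanSpace ℝ (Fin n),
        fderiv ℝ (fun y => (NormedSpace.exp (t • Q y)).mulVec f i) x
            (EuclideanSpace.single k 1)
          = ∫ s in (0:ℝ)..t,
              (NormedSpace.exp (s • Q x) * matPartialDeriv Q k x *
                NormedSpace.exp ((t - s) • Q x)).mulVec f i := by
  intro t _ f i k
  exact DuhamelAux.scalar_version Q (fun i j => (hQ i j).differentiable one_ne_zero) t f i k
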